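/- Let ε > −1 be a real number and define f(s) = (1 − e^{−2s})/((1 − e^{−s})³·(1 − e^{−(1+ε)s})) for s > 0. Then f has Hilbert-series Laurent coefficients (2/(1+ε), (2+ε)/(1+ε)) of order 3 at s = 0; i.e., s³·f(s) → 2/(1+ε) and s²·(f(s) − 2/((1+ε)s³)) → (2+ε)/(1+ε) as s → 0⁺. -/

import Mathlib

open Real Filter Asymptotics

noncomputable def Efun : ℝ → ℝ := fun x => if x = 0 then 1 else (1 - Real.exp (-x)) / x

lemma Efun_zero : Efun 0 = 1 := by simp [Efun]

lemma Efun_ne (x : ℝ) (hx : x ≠ 0) : Efun x = (1 - Real.exp (-x)) / x := by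
  simp [Efun, hx]

lemma Efun_mul (x : ℝ) (hx : x ≠ 0) : x * Efun x = 1 - Real.exp (-x) := by
  rw [Efun_ne x hx]; field_simp

lemma Efun_pos (x : ℝ) (hx : 0 < x) : 0 < Efun x := by
  rw [Efun_ne x hx.ne']
  apply div_pos _ hx
  have : Real.exp (-x) < 1 := Real.exp_lt_one_iff.2 (by linarith)
  linarith

lemma Efun_bound (x : ℝ) (hx : |x| ≤ 1) : |Efun x - 1 + x / 2| ≤ |x| ^ 2 := by
  rcases eq_or_ne x 0 with rfl | hx0
  · simp [Efun_zero]
  · have hb := Real.exp_bound (x := -x) (by rwa [abs_neg]) (n := 3) (by norm_num)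
    have hsum : ∑ m ∈ Finset.range 3, (-x) ^ m / m.factorial = 1 - x + x ^ 2 / 2 := by
      simp [Finset.sum_range_succ]
      ring
    rw [hsum] at hb
    have key : Efun x - 1 + x / 2 = -(Real.exp (-x) - (1 - x + x ^ 2 / 2)) / x := by
      rw [Efun_ne x hx0]; field_simp; ring
    rw [key, abs_div, abs_neg]
    rw [div_le_iff₀ (abs_pos.2 hx0)]
    calc |Real.exp (-x) - (1 - x + x ^ 2 / 2)| ≤ |(-x)| ^ 3 * (4 / (6 * 3)) := by
          convert hb using 2; norm_num [Nat.factorial]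
      _ ≤ |x| ^ 2 * |x| := by rw [abs_neg]; rw [pow_succ]; nlinarith [abs_nonneg x, sq_abs x]

lemma Efun_hasDerivAt : HasDerivAt Efun (-(1/2)) 0 := by
  rw [hasDerivAt_iff_isLittleO]
  have h1 : (fun x : ℝ => Efun x - Efun 0 - (x - 0) * (-(1/2))) =O[nhds 0]
      fun x => x ^ 2 := by
    rw [isBigO_iff]
    refine ⟨1, ?_⟩
    have hmem : Set.Ioo (-1 : ℝ) 1 ∈ nhds (0 : ℝ) := Ioo_mem_nhds (by norm_num) (by norm_num)
    filter_upwards [hmem] with x hx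
    have hxb : |x| ≤ 1 := by rw [abs_le]; constructor <;> [linarith [hx.1]; linarith [hx.2]]
    have := Efun_bound x hxb
    have heq : Efun x - Efun 0 - (x - 0) * (-(1/2)) = Efun x - 1 + x / 2 := by
      rw [Efun_zero]; ring
    rw [heq]
    calc |Efun x - 1 + x / 2| ≤ |x| ^ 2 := this
      _ = 1 * ‖x ^ 2‖ := by rw [one_mul, Real.norm_eq_abs, abs_pow]
  have h2 : (fun x : ℝ => x ^ 2) =o[nhds 0] fun x => x - 0 := by
    have : (fun x : ℝ => x * x) =o[nhds 0] fun x => (1 : ℝ) * x := by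
      exact IsLittleO.mul_isBigO (isLittleO_one_iff ℝ |>.2 tendsto_id) (isBigO_refl _ _)
    simpa [sq] using this
  exact h1.trans_isLittleO h2



/-- `f` has Hilbert-series Laurent coefficients `(a₀, a₁)` of order `n` at `s = 0`:
`sⁿ·f(s) → a₀` and `sⁿ⁻¹·(f(s) − a₀/sⁿ) → a₁` as `s → 0⁺`. -/
def HSLaurentCoeffs (f : ℝ → ℝ) (n : ℕ) (a₀ a₁ : ℝ) : Prop :=
  Filter.Tendsto (fun s => s ^ n * f s) (nhdsWithin 0 (Set.Ioi 0)) (nhds a₀) ∧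
  Filter.Tendsto (fun s => s ^ (n - 1) * (f s - a₀ / s ^ n))
    (nhdsWithin 0 (Set.Ioi 0)) (nhds a₁)

/-- The Hilbert series of the conifold with test symmetry giving charge `ε` to `z`,
`f(s) = (1 − e^{−2s})/((1 − e^{−s})³(1 − e^{−(1+ε)s}))`, has Laurent coefficients
`(2/(1+ε), (2+ε)/(1+ε))` of order 3. -/

theorem conifold_test_symmetry_hs_coeffs (ε : ℝ) (hε : -1 < ε) :
    HSLaurentCoeffs
      (fun s => (1 - Real.exp (-(2 * s)))
        / ((1 - Real.exp (-s)) ^ 3 * (1 - Real.exp (-((1 + ε) * s)))))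
      3 (2 / (1 + ε)) ((2 + ε) / (1 + ε)) := by
  have hε1 : (0:ℝ) < 1 + ε := by linarith
  set G : ℝ → ℝ := fun s => 2 * Efun (2 * s) / ((1 + ε) * Efun s ^ 3 * Efun ((1 + ε) * s))
    with hG
  -- derivative of G at 0
  have h2s : HasDerivAt (fun s : ℝ => 2 * s) 2 0 := by
    simpa using (hasDerivAt_id (0:ℝ)).const_mul 2
  have hes : HasDerivAt (fun s : ℝ => Efun (2 * s)) (-(1/2) * 2) 0 := by
    have h0 : HasDerivAt Efun (-(1/2)) ((fun s : ℝ => 2 * s) 0) := by simpa using Efun_hasDerivAt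
    exact h0.comp 0 h2s
  have hws : HasDerivAt (fun s : ℝ => Efun ((1 + ε) * s)) (-(1/2) * (1 + ε)) 0 := by
    have hlin : HasDerivAt (fun s : ℝ => (1 + ε) * s) (1 + ε) 0 := by
      simpa using (hasDerivAt_id (0:ℝ)).const_mul (1 + ε)
    have h0 : HasDerivAt Efun (-(1/2)) ((fun s : ℝ => (1 + ε) * s) 0) := by
      simpa using Efun_hasDerivAt
    exact h0.comp 0 hlin
  have hp : HasDerivAt (fun s : ℝ => Efun s ^ 3) ((3 : ℕ) * Efun 0 ^ 2 * (-(1/2))) 0 :=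
    Efun_hasDerivAt.pow 3
  have hN : HasDerivAt (fun s : ℝ => 2 * Efun (2 * s)) (2 * (-(1/2) * 2)) 0 := hes.const_mul 2
  have hD : HasDerivAt (fun s : ℝ => (1 + ε) * Efun s ^ 3 * Efun ((1 + ε) * s))
      ((1 + ε) * ((3 : ℕ) * Efun 0 ^ 2 * (-(1/2))) * Efun ((1 + ε) * 0)
        + (1 + ε) * Efun 0 ^ 3 * (-(1/2) * (1 + ε))) 0 :=
    (hp.const_mul (1 + ε)).mul hws
  have hD0 : (fun s : ℝ => (1 + ε) * Efun s ^ 3 * Efun ((1 + ε) * s)) 0 = 1 + ε := by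
    simp [Efun_zero]
  have hDne : (fun s : ℝ => (1 + ε) * Efun s ^ 3 * Efun ((1 + ε) * s)) 0 ≠ 0 := by
    rw [hD0]; exact hε1.ne'
  have hGd : HasDerivAt G ((2 + ε) / (1 + ε)) 0 := by
    have := hN.div hD hDne
    refine this.congr_deriv ?_
    simp only [mul_zero, Efun_zero, one_pow, mul_one, Nat.cast_ofNat]
    field_simp
    ring
  have hG0 : G 0 = 2 / (1 + ε) := by simp [hG, Efun_zero]
  -- eventual equality on Ioi 0
  have hkey : ∀ s : ℝ, s ∈ Set.Ioi (0:ℝ) →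
      s ^ 3 * ((1 - Real.exp (-(2 * s)))
        / ((1 - Real.exp (-s)) ^ 3 * (1 - Real.exp (-((1 + ε) * s))))) = G s := by
    intro s hs
    have hs0 : (0:ℝ) < s := hs
    have h1 : 1 - Real.exp (-s) = s * Efun s := (Efun_mul s hs0.ne').symm
    have h2 : 1 - Real.exp (-(2 * s)) = 2 * s * Efun (2 * s) := by
      have := Efun_mul (2 * s) (by positivity)
      linarith [this]
    have h3 : 1 - Real.exp (-((1 + ε) * s)) = (1 + ε) * s * Efun ((1 + ε) * s) := by
      have := Efun_mul ((1 + ε) * s) (by positivity)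
      linarith [this]
    rw [h1, h2, h3, hG]
    have hE1 : Efun s ≠ 0 := (Efun_pos s hs0).ne'
    have hE3 : Efun ((1 + ε) * s) ≠ 0 := (Efun_pos _ (by positivity)).ne'
    field_simp
  constructor
  · have hcont : Filter.Tendsto G (nhdsWithin 0 (Set.Ioi 0)) (nhds (2 / (1 + ε))) := by
      rw [← hG0]
      exact (hGd.continuousAt.tendsto).mono_left nhdsWithin_le_nhds
    refine hcont.congr' ?_
    filter_upwards [self_mem_nhdsWithin] with s hs
    exact (hkey s hs).symm
  · have hslope : Filter.Tendsto (slope G 0) (nhdsWithin 0 (Set.Ioi 0))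
        (nhds ((2 + ε) / (1 + ε))) := by
      have := hasDerivAt_iff_tendsto_slope.1 hGd
      exact this.mono_left (nhdsWithin_mono _ (fun x hx => by
        simp only [Set.mem_compl_iff, Set.mem_singleton_iff]
        exact ne_of_gt hx))
    refine hslope.congr' ?_
    filter_upwards [self_mem_nhdsWithin] with s hs
    have hs0 : (0:ℝ) < s := hs
    have hk := hkey s hs
    rw [slope_def_field]
    rw [hG0]
    have : (3:ℕ) - 1 = 2 := rfl
    rw [this]
    have hfs : ((1 - Real.exp (-(2 * s)))
        / ((1 - Real.exp (-s)) ^ 3 * (1 - Real.exp (-((1 + ε) * s)))))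
        = G s / s ^ 3 := by
      rw [eq_div_iff (by positivity : (s:ℝ) ^ 3 ≠ 0), mul_comm]
      exact hk
    rw [hfs]
    simp only [sub_zero]
    field_simp
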